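/- If two shortest paths P₁ and P₂ in a positively-weighted graph agree (they have a common first intersection vertex v and |P₁ ∩ P₂| ≥ 2), then they also have a common last intersection vertex w with w ≠ v: the vertex w ∈ P₁ ∩ P₂ maximizing dist(v,w) is the last vertex of both paths lying in P₁ ∩ P₂. -/

import Mathlib

/-- A graph with real edge weights that are strictly positive on edges. -/
structure WeightedGraph (V : Type*) where
  Adj : V → V → Prop
  w : V → V → ℝ
  pos : ∀ {u v : V}, Adj u v → 0 < w u v

namespace WeightedGraph

variable {V : Type*} (G : WeightedGraph V)

/-- The graph is undirected: adjacency and weights are symmetric. -/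
def IsUndirected : Prop :=
  (∀ u v, G.Adj u v → G.Adj v u) ∧ (∀ u v, G.w u v = G.w v u)

/-- Total weight of a vertex sequence (sum of weights of consecutive pairs). -/
def weight (l : List V) : ℝ :=
  ((l.zip l.tail).map fun p => G.w p.1 p.2).sum

/-- A (simple) path: a nonempty sequence of distinct vertices with consecutive
vertices adjacent. -/
def IsPath (l : List V) : Prop :=
  l ≠ [] ∧ l.Chain' G.Adj ∧ l.Nodup

/-- A path beginning at `u` and ending at `v`. -/
def IsPathFrom (l : List V) (u v : V) : Prop :=
  G.IsPath l ∧ l.head? = some u ∧ l.getLast? = some v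

/-- A shortest path between its endpoints: a path whose total weight is at most
that of any path with the same endpoints. -/
def IsShortest (l : List V) : Prop :=
  G.IsPath l ∧ ∀ l', G.IsPath l' → l'.head? = l.head? → l'.getLast? = l.getLast? →
    G.weight l ≤ G.weight l'

/-- Weighted graph distance from `u` to `v`. -/
noncomputable def dist (u v : V) : ℝ :=
  sInf {c : ℝ | ∃ l, G.IsPathFrom l u v ∧ G.weight l = c}

@[simp] lemma weight_nil : G.weight ([] : List V) = 0 := rfl
@[simp] lemma weight_singleton (a : V) : G.weight [a] = 0 := rfl
@[simp] lemma weight_cons_cons (a b : V) (l : List V) :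
    G.weight (a :: b :: l) = G.w a b + G.weight (b :: l) := rfl

lemma weight_append_cons (l₁ l₂ : List V) (a : V) :
    G.weight (l₁ ++ a :: l₂) = G.weight (l₁ ++ [a]) + G.weight (a :: l₂) := by
  induction l₁ with
  | nil => simp
  | cons x xs ih =>
    cases xs with
    | nil => simp [weight_cons_cons]
    | cons y ys =>
      simp only [List.cons_append, weight_cons_cons] at *
      rw [ih]; ring

lemma weight_nonneg {l : List V} (h : l.Chain' G.Adj) : 0 ≤ G.weight l := by
  induction l with
  | nil => simp
  | cons a t ih =>
    cases t with
    | nil => simp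
    | cons b t' =>
      simp only [List.Chain', List.isChain_cons_cons] at h
      have := G.pos h.1
      have := ih h.2
      rw [weight_cons_cons]; linarith

lemma weight_pos {l : List V} (h : l.Chain' G.Adj) (hl : 2 ≤ l.length) :
    0 < G.weight l := by
  match l, hl with
  | a :: b :: t, _ =>
    simp only [List.Chain', List.isChain_cons_cons] at h
    have := G.pos h.1
    have := G.weight_nonneg h.2
    rw [weight_cons_cons]; linarith

lemma weight_concat {l : List V} {d : V} (h : l.getLast? = some d) (b : V) :
    G.weight (l ++ [b]) = G.weight l + G.w d b := by
  induction l with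
  | nil => simp at h
  | cons x xs ih =>
    cases xs with
    | nil => simp at h; subst h; simp
    | cons y ys =>
      rw [List.getLast?_cons_cons] at h
      rw [List.cons_append, List.cons_append] at *
      rw [weight_cons_cons, ih h, weight_cons_cons]; ring

lemma weight_append_right {C : List V} {d : V} (h : C.getLast? = some d) (B : List V) :
    G.weight (C ++ B) = G.weight C + G.weight (d :: B) := by
  cases B with
  | nil => simp
  | cons b B' =>
    rw [weight_append_cons, weight_concat G h, weight_cons_cons]; ring

lemma weight_split {C : List V} {c d : V} (A B : List V)
    (h1 : C.head? = some c) (h2 : C.getLast? = some d) :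
    G.weight (A ++ C ++ B) = G.weight (A ++ [c]) + G.weight C + G.weight (d :: B) := by
  cases C with
  | nil => simp at h1
  | cons c' C' =>
    simp only [List.head?_cons, Option.some.injEq] at h1; subst h1
    rw [List.append_assoc, List.cons_append, weight_append_cons, ← List.cons_append,
      weight_append_right G h2]
    ring


lemma not_nodup_decomp : ∀ {l : List V}, ¬ l.Nodup →
    ∃ (xs : List V) (a : V) (ys zs : List V), l = xs ++ a :: (ys ++ a :: zs) := by
  intro l
  induction l with
  | nil => intro h; exact absurd List.nodup_nil h
  | cons b t ih =>
    intro h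
    by_cases hb : b ∈ t
    · obtain ⟨ys, zs, rfl⟩ := List.append_of_mem hb
      exact ⟨[], b, ys, zs, rfl⟩
    · have ht : ¬ t.Nodup := by
        intro ht; exact h (List.nodup_cons.2 ⟨hb, ht⟩)
      obtain ⟨xs, a, ys, zs, rfl⟩ := ih ht
      exact ⟨b :: xs, a, ys, zs, rfl⟩

lemma exists_path_le : ∀ (n : ℕ) (l : List V), l.length ≤ n → l ≠ [] → l.Chain' G.Adj →
    ∃ p, G.IsPath p ∧ p.head? = l.head? ∧ p.getLast? = l.getLast? ∧ G.weight p ≤ G.weight l := by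
  intro n
  induction n with
  | zero =>
    intro l hl hne _
    exact absurd (List.length_eq_zero_iff.1 (Nat.le_zero.1 hl)) hne
  | succ n ih =>
    intro l hl hne hc
    by_cases hnd : l.Nodup
    · exact ⟨l, ⟨hne, hc, hnd⟩, rfl, rfl, le_refl _⟩
    · obtain ⟨xs, a, ys, zs, rfl⟩ := not_nodup_decomp hnd
      set l' : List V := xs ++ a :: zs with hl'
      have hassoc : xs ++ a :: (ys ++ a :: zs) = xs ++ (a :: ys) ++ (a :: zs) := by simp
      have hinfix : (a :: ys) ++ [a] <:+: xs ++ a :: (ys ++ a :: zs) := by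
        refine ⟨xs, zs, ?_⟩; simp
      have hcyc : ((a :: ys) ++ [a]).Chain' G.Adj := hc.infix hinfix
      have hinfix2 : a :: zs <:+: xs ++ a :: (ys ++ a :: zs) := by
        refine ⟨xs ++ a :: ys, [], ?_⟩; simp
      have hc2 := List.isChain_append.1 hc
      have hchain' : l'.Chain' G.Adj := by
        rw [hl']; simp only [List.Chain']; rw [List.isChain_append]
        refine ⟨hc2.1, hc.infix hinfix2, ?_⟩
        intro x hx y hy
        simp only [List.head?_cons, Option.mem_def, Option.some.injEq] at hy
        subst hy
        exact hc2.2.2 x hx a (by simp)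
      have hlen : l'.length ≤ n := by
        simp only [hl', List.length_append, List.length_cons] at hl ⊢
        omega
      have hne' : l' ≠ [] := by simp [hl']
      obtain ⟨p, hp, hph, hpl, hpw⟩ := ih l' hlen hne' hchain'
      refine ⟨p, hp, ?_, ?_, ?_⟩
      · rw [hph]; cases xs <;> simp [hl']
      · obtain ⟨d, hd⟩ : ∃ d, (a :: zs).getLast? = some d :=
          ⟨_, List.getLast?_eq_getLast (by simp)⟩
        have h8 : (a :: (ys ++ a :: zs)).getLast? = some d := by
          have h7 : a :: (ys ++ a :: zs) = (a :: ys) ++ (a :: zs) := by simp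
          rw [h7, List.getLast?_append, hd]; rfl
        rw [hpl, hl']
        simp [List.getLast?_append, hd, h8]
      · refine hpw.trans ?_
        have e1 : G.weight (xs ++ a :: (ys ++ a :: zs))
            = G.weight (xs ++ [a]) + G.weight ((a :: ys) ++ [a]) + G.weight (a :: zs) := by
          rw [weight_append_cons G xs (ys ++ a :: zs) a]
          have h9 : a :: (ys ++ a :: zs) = (a :: ys) ++ a :: zs := by simp
          rw [h9, weight_append_cons G (a :: ys) zs a]
          ring
        have e2 : G.weight l' = G.weight (xs ++ [a]) + G.weight (a :: zs) :=
          weight_append_cons G xs zs a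
        have := G.weight_nonneg hcyc
        rw [e1, e2]; linarith


lemma shortest_segment {P : List V} (A C B : List V) (hP : G.IsShortest P)
    (hPeq : P = A ++ C ++ B) (hC : C ≠ []) {Q : List V} (hQ : Q ≠ [])
    (hQc : Q.Chain' G.Adj) (hQh : Q.head? = C.head?) (hQl : Q.getLast? = C.getLast?) :
    G.weight C ≤ G.weight Q := by
  obtain ⟨c, hc⟩ : ∃ c, C.head? = some c := by
    cases C with | nil => exact absurd rfl hC | cons x t => exact ⟨x, rfl⟩
  obtain ⟨d, hd⟩ : ∃ d, C.getLast? = some d :=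
    ⟨_, List.getLast?_eq_getLast hC⟩
  have hPc : P.Chain' G.Adj := hP.1.2.1
  rw [hPeq, List.append_assoc] at hPc
  obtain ⟨hA, hCB, j1⟩ := List.isChain_append.1 hPc
  obtain ⟨hCc, hB, j2⟩ := List.isChain_append.1 hCB
  have hQB : (Q ++ B).Chain' G.Adj := by
    refine List.isChain_append.2 ⟨hQc, hB, ?_⟩
    intro x hx y hy
    exact j2 x (by rw [← hQl]; exact hx) y hy
  have hhQB : (Q ++ B).head? = (C ++ B).head? := by
    rw [List.head?_append, List.head?_append, hQh]
  have hAQB : (A ++ Q ++ B).Chain' G.Adj := by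
    rw [List.append_assoc]
    refine List.isChain_append.2 ⟨hA, hQB, ?_⟩
    intro x hx y hy
    exact j1 x hx y (by rw [← hhQB]; exact hy)
  have hne : A ++ Q ++ B ≠ [] := by
    cases Q with | nil => exact absurd rfl hQ | cons x t => simp
  obtain ⟨p, hp, hph, hpl, hpw⟩ :=
    G.exists_path_le (A ++ Q ++ B).length (A ++ Q ++ B) le_rfl hne hAQB
  have hph' : p.head? = P.head? := by
    rw [hph, hPeq, List.head?_append, List.head?_append,
      List.head?_append, List.head?_append, hQh]
  have hpl' : p.getLast? = P.getLast? := by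
    rw [hpl, hPeq, List.getLast?_append (l := A ++ Q), List.getLast?_append (l := A), hQl,
      List.getLast?_append (l := A ++ C), List.getLast?_append (l := A)]
  have hwP : G.weight P ≤ G.weight p := hP.2 p hp hph' hpl'
  have e1 : G.weight (A ++ Q ++ B)
      = G.weight (A ++ [c]) + G.weight Q + G.weight (d :: B) :=
    G.weight_split A B (hQh.trans hc) (hQl.trans hd)
  have e2 : G.weight (A ++ C ++ B)
      = G.weight (A ++ [c]) + G.weight C + G.weight (d :: B) :=
    G.weight_split A B hc hd
  rw [hPeq, e2] at hwP
  rw [e1] at hpw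
  linarith


lemma dist_eq {P : List V} (A C B : List V) (hP : G.IsShortest P) {v x : V}
    (hPeq : P = A ++ C ++ B) (hh : C.head? = some v) (hl : C.getLast? = some x) :
    G.dist v x = G.weight C := by
  have hC : C ≠ [] := by intro h; rw [h] at hh; simp at hh
  have hinfix : C <:+: P := ⟨A, B, hPeq.symm⟩
  have hchain : C.Chain' G.Adj := hP.1.2.1.infix hinfix
  have hnd : C.Nodup := List.Nodup.sublist hinfix.sublist hP.1.2.2
  have hpath : G.IsPathFrom C v x := ⟨⟨hC, hchain, hnd⟩, hh, hl⟩
  have hlb : ∀ r ∈ {c | ∃ l, G.IsPathFrom l v x ∧ G.weight l = c}, G.weight C ≤ r := by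
    rintro r ⟨Q, ⟨⟨hQne, hQc, _⟩, hQh, hQl⟩, rfl⟩
    exact G.shortest_segment A C B hP hPeq hC hQne hQc (hQh.trans hh.symm) (hQl.trans hl.symm)
  have hmem : G.weight C ∈ {c | ∃ l, G.IsPathFrom l v x ∧ G.weight l = c} := ⟨C, hpath, rfl⟩
  exact le_antisymm (csInf_le ⟨_, hlb⟩ hmem) (le_csInf ⟨_, hmem⟩ hlb)


lemma head?_prefix {α : Type*} {l : List α} (r : List α) (hl : l ≠ []) :
    (l ++ r).head? = l.head? := by
  cases l with
  | nil => exact absurd rfl hl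
  | cons a t => rfl

lemma dist_lt (P pre A B : List V) (w : V) (hP : G.IsShortest P) (v : V)
    (hPeq : P = pre ++ (A ++ w :: B)) (hv : (A ++ w :: B).head? = some v)
    (x : V) (hx : x ∈ A) : G.dist v x < G.dist v w := by
  obtain ⟨A', A'', rfl⟩ := List.append_of_mem hx
  have e₁ : P = pre ++ (A' ++ [x]) ++ (A'' ++ w :: B) := by rw [hPeq]; simp
  have hhead : (A' ++ [x]).head? = some v := by
    have h5 : ((A' ++ [x]) ++ (A'' ++ w :: B)).head? = some v := by
      rw [show (A' ++ [x]) ++ (A'' ++ w :: B) = (A' ++ x :: A'') ++ w :: B by simp]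
      exact hv
    rwa [head?_prefix _ (by simp)] at h5
  have hd1 : G.dist v x = G.weight (A' ++ [x]) :=
    G.dist_eq pre (A' ++ [x]) (A'' ++ w :: B) hP e₁ hhead List.getLast?_concat
  have e₂ : P = pre ++ ((A' ++ x :: A'') ++ [w]) ++ B := by rw [hPeq]; simp
  have hhead2 : ((A' ++ x :: A'') ++ [w]).head? = some v := by
    have h5 : (((A' ++ x :: A'') ++ [w]) ++ B).head? = some v := by
      rw [show ((A' ++ x :: A'') ++ [w]) ++ B = (A' ++ x :: A'') ++ w :: B by simp]
      exact hv
    rwa [head?_prefix _ (by simp)] at h5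
  have hd2 : G.dist v w = G.weight ((A' ++ x :: A'') ++ [w]) :=
    G.dist_eq pre ((A' ++ x :: A'') ++ [w]) B hP e₂ hhead2 List.getLast?_concat
  have hsplit : G.weight ((A' ++ x :: A'') ++ [w])
      = G.weight (A' ++ [x]) + G.weight (x :: (A'' ++ [w])) := by
    rw [show (A' ++ x :: A'') ++ [w] = A' ++ x :: (A'' ++ [w]) by simp]
    exact G.weight_append_cons A' (A'' ++ [w]) x
  have hchain : (x :: (A'' ++ [w])).Chain' G.Adj :=
    hP.1.2.1.infix ⟨pre ++ A', B, by rw [hPeq]; simp⟩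
  have hpos : 0 < G.weight (x :: (A'' ++ [w])) :=
    G.weight_pos hchain (by simp)
  rw [hd1, hd2, hsplit]
  linarith

lemma exists_lastIn (S : Set V) : ∀ (L : List V), (∃ x ∈ L, x ∈ S) →
    ∃ w A B, L = A ++ w :: B ∧ w ∈ S ∧ ∀ x ∈ B, x ∉ S := by
  intro L
  induction L with
  | nil => rintro ⟨x, hx, -⟩; cases hx
  | cons a t ih =>
    intro h
    by_cases ht : ∃ x ∈ t, x ∈ S
    · obtain ⟨w, A, B, rfl, hw, hB⟩ := ih ht
      exact ⟨w, a :: A, B, rfl, hw, hB⟩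
    · obtain ⟨x, hx, hxS⟩ := h
      have hax : x = a := by
        rcases List.mem_cons.1 hx with h5 | h5
        · exact h5
        · exact absurd ⟨x, h5, hxS⟩ ht
      subst hax
      exact ⟨x, [], t, rfl, hxS, fun y hy hyS => ht ⟨y, hy, hyS⟩⟩

end WeightedGraph

/-- `v` is the first vertex of `P` lying in the set `S`. -/
def FirstIn {V : Type*} (P : List V) (S : Set V) (v : V) : Prop :=
  v ∈ S ∧ ∃ pre post : List V, P = pre ++ v :: post ∧ ∀ x ∈ pre, x ∉ S

/-- `v` is the last vertex of `P` lying in the set `S`. -/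
def LastIn {V : Type*} (P : List V) (S : Set V) (v : V) : Prop :=
  v ∈ S ∧ ∃ pre post : List V, P = pre ++ v :: post ∧ ∀ x ∈ post, x ∉ S

/-- If two shortest paths `P₁` and `P₂` agree (common first intersection vertex `v`
and `|P₁ ∩ P₂| ≥ 2`), then they have a common last intersection vertex `w ≠ v`;
namely, the vertex `w ∈ P₁ ∩ P₂` maximizing `dist v w` is the last vertex of both
paths lying in `P₁ ∩ P₂`. -/
theorem common_final_intersection {V : Type*} (G : WeightedGraph V)
    (P₁ P₂ : List V) (h₁ : G.IsShortest P₁) (h₂ : G.IsShortest P₂)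
    (S : Set V) (hS : S = {x | x ∈ P₁ ∧ x ∈ P₂})
    (v : V) (hv₁ : FirstIn P₁ S v) (hv₂ : FirstIn P₂ S v)
    (hcard : 2 ≤ S.ncard) :
    ∃ w, w ≠ v ∧ LastIn P₁ S w ∧ LastIn P₂ S w ∧
      ∀ x ∈ S, G.dist v x ≤ G.dist v w := by
  obtain ⟨hvS, pre₁, post₁, hP₁, hpre₁⟩ := hv₁
  obtain ⟨-, pre₂, post₂, hP₂, hpre₂⟩ := hv₂
  have hSfin : S.Finite := by
    rw [hS]; exact (List.finite_toSet P₁).subset fun x hx => hx.1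
  have mem_T₁ : ∀ x ∈ S, x ∈ (v :: post₁) := by
    intro x hxS
    have hx1 : x ∈ P₁ := (hS ▸ hxS).1
    rw [hP₁] at hx1
    rcases List.mem_append.1 hx1 with h | h
    · exact absurd hxS (hpre₁ x h)
    · exact h
  have mem_T₂ : ∀ x ∈ S, x ∈ (v :: post₂) := by
    intro x hxS
    have hx1 : x ∈ P₂ := (hS ▸ hxS).2
    rw [hP₂] at hx1
    rcases List.mem_append.1 hx1 with h | h
    · exact absurd hxS (hpre₂ x h)
    · exact h
  obtain ⟨w₁, A₁, B₁, hT₁, hw₁S, hB₁⟩ :=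
    WeightedGraph.exists_lastIn S (v :: post₁) ⟨v, by simp, hvS⟩
  obtain ⟨w₂, A₂, B₂, hT₂, hw₂S, hB₂⟩ :=
    WeightedGraph.exists_lastIn S (v :: post₂) ⟨v, by simp, hvS⟩
  have hhead₁ : (A₁ ++ w₁ :: B₁).head? = some v := by rw [← hT₁]; rfl
  have hhead₂ : (A₂ ++ w₂ :: B₂).head? = some v := by rw [← hT₂]; rfl
  have key₁ : ∀ x ∈ S, x ≠ w₁ → G.dist v x < G.dist v w₁ := by
    intro x hxS hxw
    have hxT := mem_T₁ x hxS
    rw [hT₁] at hxT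
    have hxA : x ∈ A₁ := by
      rcases List.mem_append.1 hxT with h | h
      · exact h
      · rcases List.mem_cons.1 h with h5 | h5
        · exact absurd h5 hxw
        · exact absurd hxS (hB₁ x h5)
    exact G.dist_lt P₁ pre₁ A₁ B₁ w₁ h₁ v (by rw [hP₁, hT₁]) hhead₁ x hxA
  have key₂ : ∀ x ∈ S, x ≠ w₂ → G.dist v x < G.dist v w₂ := by
    intro x hxS hxw
    have hxT := mem_T₂ x hxS
    rw [hT₂] at hxT
    have hxA : x ∈ A₂ := by
      rcases List.mem_append.1 hxT with h | h
      · exact h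
      · rcases List.mem_cons.1 h with h5 | h5
        · exact absurd h5 hxw
        · exact absurd hxS (hB₂ x h5)
    exact G.dist_lt P₂ pre₂ A₂ B₂ w₂ h₂ v (by rw [hP₂, hT₂]) hhead₂ x hxA
  have hle₁ : ∀ x ∈ S, G.dist v x ≤ G.dist v w₁ := by
    intro x hxS
    by_cases h : x = w₁
    · rw [h]
    · exact (key₁ x hxS h).le
  have hww : w₁ = w₂ := by
    by_contra hne
    have hlt1 := key₁ w₂ hw₂S fun h => hne h.symm
    have hlt2 := key₂ w₁ hw₁S hne
    linarith
  obtain ⟨a, b, haS, hbS, hab⟩ := (Set.one_lt_ncard_iff hSfin).1 (by omega)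
  obtain ⟨u, huS, huv⟩ : ∃ u, u ∈ S ∧ u ≠ v := by
    by_cases hav : a = v
    · exact ⟨b, hbS, fun h => hab (by rw [hav, h])⟩
    · exact ⟨a, haS, hav⟩
  have hwv : w₁ ≠ v := by
    intro hwv
    cases A₁ with
    | nil =>
      have hpost : post₁ = B₁ := by
        have := hT₁
        simp only [List.nil_append, List.cons.injEq] at this
        exact this.2
      have huT := mem_T₁ u huS
      rcases List.mem_cons.1 huT with h5 | h5
      · exact huv h5
      · exact hB₁ u (hpost ▸ h5) huS
    | cons a' A' =>
      have hnd : (v :: post₁).Nodup := by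
        have h6 := h₁.1.2.2
        rw [hP₁] at h6
        exact List.Nodup.sublist (List.suffix_append pre₁ (v :: post₁)).sublist h6
      have h7 : v ∈ post₁ := by
        have := hT₁
        rw [List.cons_append] at this
        injection this with h8a h8b
        rw [h8b, hwv]
        exact List.mem_append.2 (Or.inr List.mem_cons_self)
      exact (List.nodup_cons.1 hnd).1 h7
  refine ⟨w₁, hwv, ⟨hw₁S, pre₁ ++ A₁, B₁, by rw [hP₁, hT₁]; simp, hB₁⟩,
    ⟨hw₁S, pre₂ ++ A₂, B₂, by rw [hP₂, hT₂, hww]; simp, hB₂⟩, hle₁⟩
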